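/- Let (χ, dist, μ) be a metric space with a Borel probability measure, and adopt the one-layer attention setup: logit: ℝ^{d_h} × ℝ^{d_h} × ℝ^{d_p} → ℝ is Lipschitz with constant L_logit (with respect to the sum of the Euclidean norms of the three arguments), v: ℝ^{d_h} → ℝ^{d_h} is Lipschitz with constant L_v and v(0) = 0, p: χ × χ → ℝ^{d_p} is bounded measurable and Lipschitz with constant L_p in each argument, h: χ → ℝ^{d_h} is bounded measurable, Logit_h(x,y) = logit(h(x), h(y), p(x,y)), Att_h(x,y) = exp(Logit_h(x,y)) / ∫_χ exp(Logit_h(x,z)) dμ(z), and next(h)(x) = ∫_χ Att_h(x,y)·v(h(y)) dμ(y). Let r > 0 and ℓ ≥ LocLip_r(h), and assume (ℓ + L_p)·r ≤ 1/(2·L_logit). Then: (i) for all x, y ∈ χ with dist(x, y) ≤ r, ‖next(h)(x) − next(h)(y)‖₂ ≤ 4·L_logit·L_v·‖h‖_∞·(ℓ + L_p)·r; and (ii) sup_x ‖next(h)(x)‖₂ ≤ L_v·‖h‖_∞. -/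

import Mathlib

open MeasureTheory

set_option maxHeartbeats 1000000 in
/-- One-layer local Lipschitz bound: for the attention layer
`next(h)(x) = ∫ Att_h(x,y) • v(h(y)) dμ(y)` with Lipschitz logit, value and positional
encoding functions, the output is locally Lipschitz with constant
`4·L_logit·L_v·‖h‖_∞·(ℓ + L_p)` on scale `r`, and its sup-norm is at most `L_v·‖h‖_∞`. -/
theorem stmt3
    {χ : Type*} [MetricSpace χ] [MeasurableSpace χ]
    (μ : Measure χ) [IsProbabilityMeasure μ]
    (dh dp : ℕ)
    (logit : EuclideanSpace ℝ (Fin dh) → EuclideanSpace ℝ (Fin dh) →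
      EuclideanSpace ℝ (Fin dp) → ℝ)
    (v : EuclideanSpace ℝ (Fin dh) → EuclideanSpace ℝ (Fin dh))
    (p : χ → χ → EuclideanSpace ℝ (Fin dp))
    (h : χ → EuclideanSpace ℝ (Fin dh))
    (Llogit Lv Lp ℓ r : ℝ)
    (hLlogit : 0 ≤ Llogit) (hLv : 0 ≤ Lv) (hLp : 0 ≤ Lp) (hℓ0 : 0 ≤ ℓ) (hr : 0 < r)
    (hlogit : ∀ a b c a' b' c', |logit a b c - logit a' b' c'| ≤
      Llogit * (‖a - a'‖ + ‖b - b'‖ + ‖c - c'‖))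
    (hv : ∀ a b, ‖v a - v b‖ ≤ Lv * ‖a - b‖) (hv0 : v 0 = 0)
    (hpmeas : Measurable fun q : χ × χ => p q.1 q.2)
    (hpbdd : ∃ M : ℝ, ∀ x y, ‖p x y‖ ≤ M)
    (hplip1 : ∀ x x' y, ‖p x y - p x' y‖ ≤ Lp * dist x x')
    (hplip2 : ∀ x y y', ‖p x y - p x y'‖ ≤ Lp * dist y y')
    (hhmeas : Measurable h)
    (hhbdd : ∃ M : ℝ, ∀ x, ‖h x‖ ≤ M)
    (hloclip : ∀ x y, dist x y ≤ r → ‖h x - h y‖ ≤ ℓ * dist x y)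
    (hsmall : (ℓ + Lp) * r ≤ 1 / (2 * Llogit)) :
    (∀ x y : χ, dist x y ≤ r →
      ‖(∫ z, (Real.exp (logit (h x) (h z) (p x z)) /
            ∫ z', Real.exp (logit (h x) (h z') (p x z')) ∂μ) • v (h z) ∂μ) -
        (∫ z, (Real.exp (logit (h y) (h z) (p y z)) /
            ∫ z', Real.exp (logit (h y) (h z') (p y z')) ∂μ) • v (h z) ∂μ)‖ ≤
        4 * Llogit * Lv * (⨆ x', ‖h x'‖) * (ℓ + Lp) * r) ∧
    (∀ x : χ,
      ‖∫ z, (Real.exp (logit (h x) (h z) (p x z)) /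
          ∫ z', Real.exp (logit (h x) (h z') (p x z')) ∂μ) • v (h z) ∂μ‖ ≤
        Lv * ⨆ x', ‖h x'‖) := by
  classical
  obtain ⟨Mh, hMh⟩ := hhbdd
  obtain ⟨Mp, hMp⟩ := hpbdd
  set S : ℝ := ⨆ x', ‖h x'‖ with hSdef
  have hbddS : BddAbove (Set.range fun x => ‖h x‖) := ⟨Mh, by rintro _ ⟨x, rfl⟩; exact hMh x⟩
  have hS : ∀ z, ‖h z‖ ≤ S := fun z => le_ciSup hbddS z
  have contv : Continuous v := by
    refine LipschitzWith.continuous (LipschitzWith.of_dist_le_mul (K := Lv.toNNReal) ?_)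
    intro a b
    rw [dist_eq_norm, dist_eq_norm, Real.coe_toNNReal Lv hLv]
    exact hv a b
  have cont_logit : ∀ a, Continuous fun q :
      (EuclideanSpace ℝ (Fin dh)) × (EuclideanSpace ℝ (Fin dp)) => logit a q.1 q.2 := by
    intro a
    refine LipschitzWith.continuous (LipschitzWith.of_dist_le_mul (K := (2*Llogit).toNNReal) ?_)
    intro q q'
    have h1 := hlogit a q.1 q.2 a q'.1 q'.2
    simp only [sub_self, norm_zero, zero_add] at h1
    have h2 : ‖q.1 - q'.1‖ ≤ dist q q' := by
      rw [← dist_eq_norm, Prod.dist_eq]; exact le_max_left _ _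
    have h3 : ‖q.2 - q'.2‖ ≤ dist q q' := by
      rw [← dist_eq_norm, Prod.dist_eq]; exact le_max_right _ _
    rw [Real.dist_eq, Real.coe_toNNReal' (2*Llogit)]
    have hmax : (2*Llogit) ≤ max (2*Llogit) 0 := le_max_left _ _
    nlinarith [dist_nonneg (x := q) (y := q'),
      mul_le_mul_of_nonneg_left (add_le_add h2 h3) hLlogit]
  set B : ℝ := |logit 0 0 0| + Llogit * (S + S + Mp) with hBdef
  let f : χ → χ → ℝ := fun a z => Real.exp (logit (h a) (h z) (p a z))
  let Dd : χ → ℝ := fun a => ∫ z, f a z ∂μ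
  let g : χ → EuclideanSpace ℝ (Fin dh) := fun z => v (h z)
  have hlogB : ∀ a z, |logit (h a) (h z) (p a z)| ≤ B := by
    intro a z
    have h1 := hlogit (h a) (h z) (p a z) 0 0 0
    simp only [sub_zero] at h1
    have h4 : |logit (h a) (h z) (p a z)| ≤
        |logit (h a) (h z) (p a z) - logit 0 0 0| + |logit 0 0 0| := by
      calc |logit (h a) (h z) (p a z)|
          = |(logit (h a) (h z) (p a z) - logit 0 0 0) + logit 0 0 0| := by
            rw [sub_add_cancel]
        _ ≤ _ := abs_add_le _ _
    have h5 : Llogit * (‖h a‖ + ‖h z‖ + ‖p a z‖) ≤ Llogit * (S + S + Mp) :=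
      mul_le_mul_of_nonneg_left (by linarith [hS a, hS z, hMp a z]) hLlogit
    rw [hBdef]; linarith
  have hf_meas : ∀ a, Measurable (fun z => f a z) := by
    intro a
    have m1 : Measurable fun z => p a z := hpmeas.comp measurable_prodMk_left
    have m2 : Measurable fun z => (h z, p a z) := hhmeas.prodMk m1
    have m3 : Continuous fun q : (EuclideanSpace ℝ (Fin dh)) × (EuclideanSpace ℝ (Fin dp)) =>
        Real.exp (logit (h a) q.1 q.2) := Real.continuous_exp.comp (cont_logit (h a))
    have m4 := m3.measurable
    have m5 := m4.comp m2
    exact m5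
  have hf_pos : ∀ a z, 0 < f a z := fun a z => Real.exp_pos _
  have hf_ub : ∀ a z, f a z ≤ Real.exp B := fun a z =>
    Real.exp_le_exp.2 (le_trans (le_abs_self _) (hlogB a z))
  have hf_lb : ∀ a z, Real.exp (-B) ≤ f a z := fun a z =>
    Real.exp_le_exp.2 (neg_le_of_abs_le (hlogB a z))
  have hf_int : ∀ a, Integrable (fun z => f a z) μ := by
    intro a
    refine (integrable_const (Real.exp B)).mono' (hf_meas a).aestronglyMeasurable
      (ae_of_all _ ?_)
    intro z
    rw [Real.norm_eq_abs, abs_of_pos (hf_pos a z)]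
    exact hf_ub a z
  have hD_lb : ∀ a, Real.exp (-B) ≤ Dd a := by
    intro a
    calc Real.exp (-B) = ∫ _, Real.exp (-B) ∂μ := by simp
      _ ≤ Dd a := integral_mono (integrable_const _) (hf_int a) (fun z => hf_lb a z)
  have hD_pos : ∀ a, 0 < Dd a := fun a => lt_of_lt_of_le (Real.exp_pos _) (hD_lb a)
  have hAtt_nonneg : ∀ a z, 0 ≤ f a z / Dd a := fun a z =>
    div_nonneg (hf_pos a z).le (hD_pos a).le
  have hAtt_int : ∀ a, Integrable (fun z => f a z / Dd a) μ := fun a => (hf_int a).div_const _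
  have hAtt_sum : ∀ a, ∫ z, f a z / Dd a ∂μ = 1 := by
    intro a
    rw [integral_div]
    exact div_self (hD_pos a).ne'
  have hg_meas : Measurable g := contv.measurable.comp hhmeas
  have hg_bd : ∀ z, ‖g z‖ ≤ Lv * S := by
    intro z
    have hgz : g z = v (h z) - v 0 := by rw [hv0, sub_zero]
    rw [hgz]
    calc ‖v (h z) - v 0‖ ≤ Lv * ‖h z - 0‖ := hv _ _
      _ = Lv * ‖h z‖ := by rw [sub_zero]
      _ ≤ Lv * S := mul_le_mul_of_nonneg_left (hS z) hLv
  have hI : ∀ a, Integrable (fun z => (f a z / Dd a) • g z) μ := by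
    intro a
    have hS0 : 0 ≤ S := (norm_nonneg (h a)).trans (hS a)
    refine (integrable_const (Real.exp B / Real.exp (-B) * (Lv * S))).mono'
      ((((hf_meas a).div_const _).smul hg_meas).aestronglyMeasurable) (ae_of_all _ ?_)
    intro z
    rw [norm_smul, Real.norm_eq_abs, abs_of_nonneg (hAtt_nonneg a z)]
    exact mul_le_mul (div_le_div₀ (Real.exp_pos B).le (hf_ub a z) (Real.exp_pos (-B)) (hD_lb a))
      (hg_bd z) (norm_nonneg _) (by positivity)
  constructor
  · intro x y hxy
    have hS0 : 0 ≤ S := (norm_nonneg (h x)).trans (hS x)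
    set d : ℝ := Llogit * ((ℓ + Lp) * r) with hddef
    have hd0 : 0 ≤ d := mul_nonneg hLlogit (mul_nonneg (by linarith) hr.le)
    have hdhalf : d ≤ 1/2 := by
      rcases eq_or_lt_of_le hLlogit with hL | hL
      · simp [hddef, ← hL]
      · have h1 := mul_le_mul_of_nonneg_left hsmall hLlogit
        rw [hddef]
        calc Llogit * ((ℓ+Lp)*r) ≤ Llogit * (1/(2*Llogit)) := h1
          _ = 1/2 := by field_simp
    have hlog_diff : ∀ z, |logit (h x) (h z) (p x z) - logit (h y) (h z) (p y z)| ≤ d := by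
      intro z
      have h1 := hlogit (h x) (h z) (p x z) (h y) (h z) (p y z)
      simp only [sub_self, norm_zero, add_zero] at h1
      have h2 := hloclip x y hxy
      have h3 := hplip1 x y z
      have h5 := mul_le_mul_of_nonneg_left hxy (add_nonneg hℓ0 hLp)
      have h4 : ‖h x - h y‖ + ‖p x z - p y z‖ ≤ (ℓ + Lp) * r := by nlinarith [h2, h3, h5]
      rw [hddef]
      linarith [mul_le_mul_of_nonneg_left h4 hLlogit]
    have hf_le : ∀ z, f x z ≤ Real.exp d * f y z := by
      intro z
      calc f x z = Real.exp (logit (h x) (h z) (p x z)) := rfl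
        _ ≤ Real.exp (d + logit (h y) (h z) (p y z)) :=
            Real.exp_le_exp.2 (by linarith [(abs_le.1 (hlog_diff z)).2])
        _ = Real.exp d * f y z := Real.exp_add _ _
    have hf_ge : ∀ z, Real.exp (-d) * f y z ≤ f x z := by
      intro z
      calc Real.exp (-d) * f y z = Real.exp (-d + logit (h y) (h z) (p y z)) :=
            (Real.exp_add _ _).symm
        _ ≤ Real.exp (logit (h x) (h z) (p x z)) :=
            Real.exp_le_exp.2 (by linarith [(abs_le.1 (hlog_diff z)).1])
        _ = f x z := rfl
    have hD_le : Dd x ≤ Real.exp d * Dd y := by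
      calc Dd x ≤ ∫ z, Real.exp d * f y z ∂μ :=
            integral_mono (hf_int x) ((hf_int y).const_mul _) hf_le
        _ = Real.exp d * Dd y := integral_const_mul _ _
    have hD_ge : Real.exp (-d) * Dd y ≤ Dd x := by
      calc Real.exp (-d) * Dd y = ∫ z, Real.exp (-d) * f y z ∂μ := (integral_const_mul _ _).symm
        _ ≤ Dd x := integral_mono ((hf_int y).const_mul _) (hf_int x) hf_ge
    have hAtt_ub : ∀ z, f x z / Dd x ≤ Real.exp (2*d) * (f y z / Dd y) := by
      intro z
      have h1 : f x z / Dd x ≤ (Real.exp d * f y z) / (Real.exp (-d) * Dd y) :=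
        div_le_div₀ (mul_nonneg (Real.exp_pos d).le (hf_pos y z).le) (hf_le z)
          (mul_pos (Real.exp_pos (-d)) (hD_pos y)) hD_ge
      calc f x z / Dd x ≤ _ := h1
        _ = (Real.exp d / Real.exp (-d)) * (f y z / Dd y) := mul_div_mul_comm _ _ _ _
        _ = Real.exp (2*d) * (f y z / Dd y) := by
            rw [← Real.exp_sub, show d - -d = 2*d by ring]
    have hAtt_lb : ∀ z, Real.exp (-(2*d)) * (f y z / Dd y) ≤ f x z / Dd x := by
      intro z
      have h1 : (Real.exp (-d) * f y z) / (Real.exp d * Dd y) ≤ f x z / Dd x :=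
        div_le_div₀ (hf_pos x z).le (hf_ge z) (hD_pos x) hD_le
      calc Real.exp (-(2*d)) * (f y z / Dd y)
          = (Real.exp (-d) / Real.exp d) * (f y z / Dd y) := by
            rw [← Real.exp_sub, show -d - d = -(2*d) by ring]
        _ = (Real.exp (-d) * f y z) / (Real.exp d * Dd y) := (mul_div_mul_comm _ _ _ _).symm
        _ ≤ f x z / Dd x := h1
    have hAttd : ∀ z, |f x z / Dd x - f y z / Dd y| ≤
        (Real.exp (2*d) - 1) * (f y z / Dd y) := by
      intro z
      have e1 := Real.add_one_le_exp (2*d)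
      have e2 := Real.add_one_le_exp (-(2*d))
      rw [abs_sub_le_iff]
      constructor
      · nlinarith [hAtt_ub z, hAtt_nonneg y z]
      · nlinarith [hAtt_lb z, hAtt_nonneg y z]
    have hexp4 : Real.exp (2*d) - 1 ≤ 4*d := by
      have ht1 : 2*d ≤ 1 := by linarith
      have hc := convexOn_exp.2 (Set.mem_univ (0:ℝ)) (Set.mem_univ (1:ℝ))
        (by linarith : (0:ℝ) ≤ 1 - 2*d) (by linarith : (0:ℝ) ≤ 2*d) (by ring)
      simp only [smul_eq_mul, mul_zero, mul_one, zero_add, Real.exp_zero] at hc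
      have he := Real.exp_one_lt_d9
      nlinarith [hc, he, hd0, mul_nonneg hd0
        (by linarith [Real.exp_one_lt_d9] : (0:ℝ) ≤ 3 - Real.exp 1)]
    have hint : Integrable (fun z => (f x z / Dd x) • g z - (f y z / Dd y) • g z) μ :=
      (hI x).sub (hI y)
    have hbound : ∀ z, ‖(f x z / Dd x) • g z - (f y z / Dd y) • g z‖ ≤
        ((Real.exp (2*d) - 1) * (f y z / Dd y)) * (Lv * S) := by
      intro z
      rw [← sub_smul, norm_smul, Real.norm_eq_abs]
      exact mul_le_mul (hAttd z) (hg_bd z) (norm_nonneg _)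
        (mul_nonneg (by nlinarith [Real.add_one_le_exp (2*d)]) (hAtt_nonneg y z))
    have key : ‖(∫ z, (f x z / Dd x) • g z ∂μ) - ∫ z, (f y z / Dd y) • g z ∂μ‖ ≤
        4 * Llogit * Lv * S * (ℓ + Lp) * r := by
      rw [← integral_sub (hI x) (hI y)]
      calc ‖∫ z, ((f x z / Dd x) • g z - (f y z / Dd y) • g z) ∂μ‖
          ≤ ∫ z, ‖(f x z / Dd x) • g z - (f y z / Dd y) • g z‖ ∂μ :=
            norm_integral_le_integral_norm _
        _ ≤ ∫ z, ((Real.exp (2*d) - 1) * (f y z / Dd y)) * (Lv * S) ∂μ :=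
            integral_mono hint.norm (((hAtt_int y).const_mul _).mul_const _) hbound
        _ = ((Real.exp (2*d) - 1) * ∫ z, f y z / Dd y ∂μ) * (Lv * S) := by
            rw [integral_mul_const, integral_const_mul]
        _ = (Real.exp (2*d) - 1) * (Lv * S) := by rw [hAtt_sum y]; ring
        _ ≤ (4*d) * (Lv * S) := mul_le_mul_of_nonneg_right hexp4 (mul_nonneg hLv hS0)
        _ = 4 * Llogit * Lv * S * (ℓ + Lp) * r := by rw [hddef]; ring
    exact key
  · intro x
    calc ‖∫ z, (f x z / Dd x) • g z ∂μ‖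
        ≤ ∫ z, ‖(f x z / Dd x) • g z‖ ∂μ := norm_integral_le_integral_norm _
      _ ≤ ∫ z, (f x z / Dd x) * (Lv * S) ∂μ :=
          integral_mono (hI x).norm ((hAtt_int x).mul_const _) (fun z => by
            rw [norm_smul, Real.norm_eq_abs, abs_of_nonneg (hAtt_nonneg x z)]
            exact mul_le_mul_of_nonneg_left (hg_bd z) (hAtt_nonneg x z))
      _ = (∫ z, f x z / Dd x ∂μ) * (Lv * S) := integral_mul_const _ _
      _ = Lv * S := by rw [hAtt_sum x]; ring
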